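/- Let ρ_C, ρ_L, α > 0 and τ_C, τ_B, τ_I > 0, and suppose 0 < I_0 < I_0^crit where I_0^crit = (1/(τ_C ρ_C))(1 − τ_B/(τ_B + τ_I(1 + τ_B ρ_L))). Write L_3 = 1/(τ_C ρ_C) − I_0(1 + τ_B/(τ_I(1 + τ_B ρ_L))). Then every complex root of the cubic p(λ) = λ³ + λ²(1/τ_B + ρ_L) + λ ρ_C ρ_L (1/(ρ_C τ_C) − I_0) + ρ_C ρ_L L_3 (1/τ_B + ρ_L) has strictly negative real part; i.e. the coexistence equilibrium P_3 is linearly asymptotically stable. -/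

import Mathlib

lemma cubic_RH (a b c : ℝ) (ha : 0 < a) (hb : 0 < b) (hc : 0 < c) (hab : c < a * b) :
    ∀ z : ℂ, z ^ 3 + (a : ℂ) * z ^ 2 + (b : ℂ) * z + (c : ℂ) = 0 → z.re < 0 := by
  rintro ⟨x, y⟩ hz
  by_contra hx
  push_neg at hx
  simp only [Complex.ext_iff, Complex.add_re, Complex.add_im, Complex.mul_re, Complex.mul_im,
    pow_succ, pow_zero, one_mul, Complex.one_re, Complex.one_im, Complex.ofReal_re,
    Complex.ofReal_im, Complex.zero_re, Complex.zero_im] at hz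
  obtain ⟨hre, him⟩ := hz
  simp only [Complex.add_re] at hx
  have hfac : y * (3 * x ^ 2 - y ^ 2 + 2 * a * x + b) = 0 := by nlinarith [him]
  rcases mul_eq_zero.1 hfac with hy | hy
  · subst hy
    nlinarith [hre, hx, sq_nonneg x, mul_nonneg (mul_nonneg hx hx) hx]
  · have hy2 : y ^ 2 = 3 * x ^ 2 + 2 * a * x + b := by linarith
    nlinarith [hre, hy2, hx, mul_nonneg hx hx, mul_nonneg (mul_nonneg hx hx) hx,
      mul_nonneg (mul_nonneg hx hx) ha.le, mul_nonneg hx hb.le, mul_nonneg hx (mul_nonneg ha.le ha.le)]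


/-- **Asymptotic stability of `P₃` (Routh–Hurwitz).**
If `0 < I₀ < I₀^crit`, where
`I₀^crit = (1/(τCρC))(1 − τB/(τB + τI(1 + τBρL)))`, and
`L₃ = 1/(τCρC) − I₀(1 + τB/(τI(1 + τBρL)))`, then every complex root of the cubic
`p(λ) = λ³ + λ²(1/τB + ρL) + λ·ρCρL(1/(ρCτC) − I₀) + ρCρL·L₃·(1/τB + ρL)` has
strictly negative real part; i.e. the coexistence equilibrium `P₃` is linearly
asymptotically stable. -/
theorem P3_linearly_stable
    (ρC ρL α I₀ τC τB τI : ℝ)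
    (hρC : 0 < ρC) (hρL : 0 < ρL) (hα : 0 < α)
    (hτC : 0 < τC) (hτB : 0 < τB) (hτI : 0 < τI)
    (hI₀pos : 0 < I₀)
    (hI₀crit : I₀ < (1 / (τC * ρC)) * (1 - τB / (τB + τI * (1 + τB * ρL))))
    (L₃ : ℝ)
    (hL₃ : L₃ = 1 / (τC * ρC) - I₀ * (1 + τB / (τI * (1 + τB * ρL)))) :
    ∀ z : ℂ,
      z ^ 3 + ((1 / τB + ρL : ℝ) : ℂ) * z ^ 2 +
          ((ρC * ρL * (1 / (ρC * τC) - I₀) : ℝ) : ℂ) * z +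
          ((ρC * ρL * L₃ * (1 / τB + ρL) : ℝ) : ℂ) = 0 →
        z.re < 0 := by
  have hE : 0 < τI * (1 + τB * ρL) := by positivity
  have hD : 0 < τB + τI * (1 + τB * ρL) := by positivity
  have key : (1 / (τC * ρC)) * (1 - τB / (τB + τI * (1 + τB * ρL))) *
      (τC * ρC * (τB + τI * (1 + τB * ρL))) = τI * (1 + τB * ρL) := by
    field_simp
    ring
  have hcrit : I₀ * (τC * ρC) * (τB + τI * (1 + τB * ρL)) < τI * (1 + τB * ρL) := by
    have h := mul_lt_mul_of_pos_right hI₀crit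
      (show (0:ℝ) < τC * ρC * (τB + τI * (1 + τB * ρL)) by positivity)
    rw [key] at h
    nlinarith [h]
  have ha : (0:ℝ) < 1 / τB + ρL := by positivity
  have hb : (0:ℝ) < ρC * ρL * (1 / (ρC * τC) - I₀) := by
    have h1 : I₀ * (ρC * τC) < 1 := by nlinarith [hcrit, hD, hτB]
    have h2 : I₀ < 1 / (ρC * τC) := by
      rw [lt_div_iff₀ (by positivity)]; linarith
    have : 0 < 1 / (ρC * τC) - I₀ := by linarith
    positivity
  have h2 : L₃ * (τC * ρC * (τI * (1 + τB * ρL))) =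
      (τI * (1 + τB * ρL) - I₀ * (τC * ρC) * (τB + τI * (1 + τB * ρL))) := by
    rw [hL₃]; field_simp; ring
  have hL₃pos : 0 < L₃ := by nlinarith [h2, hcrit, mul_pos (mul_pos hτC hρC) hE]
  have hc : (0:ℝ) < ρC * ρL * L₃ * (1 / τB + ρL) := by positivity
  have h3 : 1 / (ρC * τC) - I₀ - L₃ = I₀ * τB / (τI * (1 + τB * ρL)) := by
    rw [hL₃]; field_simp; ring
  have hlt : L₃ < 1 / (ρC * τC) - I₀ := by
    have : 0 < I₀ * τB / (τI * (1 + τB * ρL)) := by positivity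
    linarith
  have hab : ρC * ρL * L₃ * (1 / τB + ρL) <
      (1 / τB + ρL) * (ρC * ρL * (1 / (ρC * τC) - I₀)) := by
    have h4 := mul_lt_mul_of_pos_left hlt (mul_pos (mul_pos hρC hρL) ha)
    nlinarith [h4]
  exact cubic_RH _ _ _ ha hb hc hab
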